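/- Let x_n = θ·n + β mod 1 for n = 0, 1, ..., M−1, where θ is an irrational real number with finite irrationality exponent κ and β is any real number. Then for any subinterval (a,b) ⊂ (0,1) and any ε' > 0 with −1/κ + ε' < 0, the number of indices n with x_n ∈ (a,b) equals (b−a)·M + O(M^{1−1/κ+ε'}), with the implied constant independent of β. -/

import Mathlib

open Finset

/-- The set of good rational approximations of `x` at quality `μ`. -/
def irrApproxSet (x : ℝ) (μ : ℝ) : Set (ℤ × ℤ) :=
  {pq | 0 < pq.2 ∧ IsCoprime pq.1 pq.2 ∧ 0 < |x - (pq.1 : ℝ) / (pq.2 : ℝ)| ∧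
    |x - (pq.1 : ℝ) / (pq.2 : ℝ)| < 1 / ((pq.2 : ℝ) ^ μ)}

/-- The irrationality exponent of `x`, as an extended real. -/
noncomputable def irrationalityExponent (x : ℝ) : EReal :=
  sSup {e : EReal | ∃ μ : ℝ, e = (μ : EReal) ∧ (irrApproxSet x μ).Infinite}


lemma fract_sub_floor (y : ℝ) : Int.fract y = y - ⌊y⌋ := rfl

lemma fract_perturb_mem_Icc {y e a b δ : ℝ} (he : |e| ≤ δ)
    (h0 : 0 ≤ a - δ) (h1 : b + δ < 1) (hy : Int.fract y ∈ Set.Ioo a b) :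
    Int.fract (y - e) ∈ Set.Icc (a - δ) (b + δ) := by
  obtain ⟨hy1, hy2⟩ := hy
  rw [fract_sub_floor] at hy1 hy2
  have he1 : -δ ≤ e := neg_le_of_abs_le he
  have he2 : e ≤ δ := le_of_abs_le he
  have hz1 : a - δ ≤ y - e - ⌊y⌋ := by linarith
  have hz2 : y - e - ⌊y⌋ ≤ b + δ := by linarith
  have : y - e = (⌊y⌋ : ℝ) + (y - e - ⌊y⌋) := by ring
  rw [this, Int.fract_intCast_add, Int.fract_eq_self.mpr ⟨by linarith, by linarith⟩]
  exact ⟨hz1, hz2⟩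

lemma fract_perturb_mem_Ioo {y e a b δ : ℝ} (he : |e| < δ)
    (h0 : 0 ≤ a) (h1 : b < 1)
    (hy : Int.fract y ∈ Set.Icc (a + δ) (b - δ)) :
    Int.fract (y + e) ∈ Set.Ioo a b := by
  obtain ⟨hy1, hy2⟩ := hy
  rw [fract_sub_floor] at hy1 hy2
  have he1 : -δ < e := neg_lt_of_abs_lt he
  have he2 : e < δ := lt_of_abs_lt he
  have hz1 : a < y + e - ⌊y⌋ := by linarith
  have hz2 : y + e - ⌊y⌋ < b := by linarith
  have : y + e = (⌊y⌋ : ℝ) + (y + e - ⌊y⌋) := by ring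
  rw [this, Int.fract_intCast_add, Int.fract_eq_self.mpr ⟨by linarith, by linarith⟩]
  exact ⟨hz1, hz2⟩

lemma grid_count (q : ℕ) (hq : 0 < q) (c u v : ℝ) (hu : 0 ≤ u) (huv : u ≤ v) (hv : v < 1) :
    (q : ℝ) * (v - u) - 1 ≤ (((Finset.range q).filter
        (fun k : ℕ => Int.fract (c + (k : ℝ)/(q : ℝ)) ∈ Set.Icc u v)).card : ℝ) ∧
      (((Finset.range q).filter
        (fun k : ℕ => Int.fract (c + (k : ℝ)/(q : ℝ)) ∈ Set.Icc u v)).card : ℝ) ≤ (q : ℝ) * (v - u) + 1 := by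
  have hq' : (0:ℝ) < q := Nat.cast_pos.mpr hq
  set t := Int.fract c with ht
  have ht0 : 0 ≤ t := Int.fract_nonneg c
  have ht1 : t < 1 := Int.fract_lt_one c
  set A := (q:ℝ) * (u - t) with hA
  set B := (q:ℝ) * (v - t) with hB
  have hAB : A ≤ B := by rw [hA, hB]; nlinarith
  have hAq : -(q:ℝ) < A := by rw [hA]; nlinarith
  have hBq : B < q := by rw [hB]; nlinarith
  have hBA : B < A + q := by rw [hA, hB]; nlinarith
  have key : ∀ k ∈ Finset.range q, (Int.fract (c + (k : ℝ)/(q : ℝ)) ∈ Set.Icc u v ↔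
      (A ≤ (k:ℝ) ∧ (k:ℝ) ≤ B) ∨ (A + q ≤ (k:ℝ) ∧ (k:ℝ) ≤ B + q)) := by
    intro k hk
    have hkq : (k:ℝ) < q := by exact_mod_cast Finset.mem_range.mp hk
    have hk0 : (0:ℝ) ≤ k := Nat.cast_nonneg k
    have e1 : ∀ w : ℝ, ((q:ℝ) * w ≤ (k:ℝ) ↔ w ≤ (k:ℝ)/q) := fun w => by
      rw [le_div_iff₀ hq', mul_comm]
    have e2 : ∀ w : ℝ, ((k:ℝ) ≤ (q:ℝ) * w ↔ (k:ℝ)/q ≤ w) := fun w => by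
      rw [div_le_iff₀ hq', mul_comm]
    have hfr : Int.fract (c + (k : ℝ)/(q : ℝ)) = Int.fract (t + (k:ℝ)/q) := by
      have hcc : c + (k : ℝ)/(q : ℝ) = (⌊c⌋ : ℝ) + (t + (k:ℝ)/q) := by
        rw [ht]; unfold Int.fract; ring
      rw [hcc, Int.fract_intCast_add]
    have hs0 : 0 ≤ t + (k:ℝ)/q := by positivity
    have hkq' : (k:ℝ)/q < 1 := (div_lt_one hq').mpr hkq
    have hd0 : 0 ≤ (k:ℝ)/q := by positivity
    rcases lt_or_ge (t + (k:ℝ)/q) 1 with hs1 | hs1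
    · rw [hfr, Int.fract_eq_self.mpr ⟨hs0, hs1⟩]
      constructor
      · rintro ⟨h1, h2⟩
        exact Or.inl ⟨by rw [hA]; exact (e1 _).mpr (by linarith),
          by rw [hB]; exact (e2 _).mpr (by linarith)⟩
      · rintro (⟨h1, h2⟩ | ⟨h1, h2⟩)
        · rw [hA] at h1; rw [hB] at h2
          exact ⟨by have := (e1 _).mp h1; linarith, by have := (e2 _).mp h2; linarith⟩
        · exfalso
          rw [hA] at h1
          have : (q:ℝ) * (u - t + 1) ≤ k := by push_cast; rw [mul_add, mul_one]; linarith
          have := (e1 _).mp this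
          linarith
    · have hfr2 : Int.fract (t + (k:ℝ)/q) = t + (k:ℝ)/q - 1 := by
        have h1 : Int.fract (t + (k:ℝ)/q - 1 + ((1:ℤ):ℝ)) = Int.fract (t + (k:ℝ)/q - 1) :=
          Int.fract_add_intCast _ 1
        have h2 : Int.fract (t + (k:ℝ)/q - 1) = t + (k:ℝ)/q - 1 :=
          Int.fract_eq_self.mpr ⟨by linarith, by linarith⟩
        calc Int.fract (t + (k:ℝ)/q)
            = Int.fract (t + (k:ℝ)/q - 1 + ((1:ℤ):ℝ)) := congrArg Int.fract (by push_cast; ring)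
          _ = t + (k:ℝ)/q - 1 := by rw [h1, h2]
      rw [hfr, hfr2]
      constructor
      · rintro ⟨h1, h2⟩
        refine Or.inr ⟨?_, ?_⟩
        · rw [hA]
          have : (q:ℝ) * (u - t + 1) ≤ k := (e1 _).mpr (by linarith)
          push_cast at this ⊢; linarith [this]
        · rw [hB]
          have : (k:ℝ) ≤ (q:ℝ) * (v - t + 1) := (e2 _).mpr (by linarith)
          push_cast at this ⊢; linarith [this]
      · rintro (⟨h1, h2⟩ | ⟨h1, h2⟩)
        · exfalso
          rw [hB] at h2
          have := (e2 _).mp h2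
          linarith
        · rw [hA] at h1; rw [hB] at h2
          have h1' : (q:ℝ) * (u - t + 1) ≤ k := by rw [mul_add, mul_one]; linarith
          have h2' : (k:ℝ) ≤ (q:ℝ) * (v - t + 1) := by rw [mul_add, mul_one]; linarith
          have := (e1 _).mp h1'
          have := (e2 _).mp h2'
          exact ⟨by linarith, by linarith⟩
  have cardeq : ((Finset.range q).filter
      (fun k : ℕ => Int.fract (c + (k : ℝ)/(q : ℝ)) ∈ Set.Icc u v)).card
      = (Finset.Icc ⌈A⌉ ⌊B⌋).card := by
    apply Finset.card_bij' (fun (k : ℕ) _ => if (k:ℝ) ≤ B then (k:ℤ) else (k:ℤ) - q)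
      (fun (m : ℤ) _ => if 0 ≤ m then m.toNat else (m+q).toNat)
    · intro k hk
      obtain ⟨hkr, hkp⟩ := Finset.mem_filter.mp hk
      rcases (key k hkr).mp hkp with ⟨h1, h2⟩ | ⟨h1, h2⟩
      · rw [if_pos h2]
        exact Finset.mem_Icc.mpr ⟨Int.ceil_le.mpr (by exact_mod_cast h1),
          Int.le_floor.mpr (by exact_mod_cast h2)⟩
      · have hnb : ¬ ((k:ℝ) ≤ B) := by push_neg; linarith
        rw [if_neg hnb]
        refine Finset.mem_Icc.mpr ⟨Int.ceil_le.mpr ?_, Int.le_floor.mpr ?_⟩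
        · push_cast; linarith
        · push_cast; linarith
    · intro m hm
      obtain ⟨hm1, hm2⟩ := Finset.mem_Icc.mp hm
      have hm1' : A ≤ (m:ℝ) := le_trans (Int.le_ceil A) (by exact_mod_cast hm1)
      have hm2' : (m:ℝ) ≤ B := le_trans (by exact_mod_cast hm2) (Int.floor_le B)
      by_cases h0 : 0 ≤ m
      · rw [if_pos h0]
        have hmq : m < (q:ℤ) := by exact_mod_cast lt_of_le_of_lt hm2' hBq
        have hmem : m.toNat ∈ Finset.range q := Finset.mem_range.mpr (by omega)
        refine Finset.mem_filter.mpr ⟨hmem, (key _ hmem).mpr ?_⟩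
        have hcast : ((m.toNat : ℕ) : ℝ) = (m : ℝ) := by
          have h := Int.toNat_of_nonneg h0
          calc ((m.toNat : ℕ) : ℝ) = ((m.toNat : ℤ) : ℝ) := by push_cast; ring
            _ = (m : ℝ) := by rw [h]
        exact Or.inl ⟨by rw [hcast]; exact hm1', by rw [hcast]; exact hm2'⟩
      · rw [if_neg h0]
        push_neg at h0
        have hpos : 0 < m + q := by
          have : -(q:ℝ) < (m:ℝ) := lt_of_lt_of_le hAq hm1'
          have : -(q:ℤ) < m := by exact_mod_cast this
          omega
        have hlt : m + q < q := by omega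
        have hmem : (m+q).toNat ∈ Finset.range q := Finset.mem_range.mpr (by omega)
        refine Finset.mem_filter.mpr ⟨hmem, (key _ hmem).mpr ?_⟩
        have hcast : (((m+q).toNat : ℕ) : ℝ) = (m : ℝ) + q := by
          have h := Int.toNat_of_nonneg hpos.le
          calc (((m+q).toNat : ℕ) : ℝ) = (((m+q).toNat : ℤ) : ℝ) := by push_cast; ring
            _ = (m : ℝ) + q := by rw [h]; push_cast; ring
        exact Or.inr ⟨by rw [hcast]; linarith, by rw [hcast]; linarith⟩
    · intro k hk
      by_cases hc : (k:ℝ) ≤ B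
      · simp [hc]
      · rw [if_neg hc]
        obtain ⟨hkr, hkp⟩ := Finset.mem_filter.mp hk
        have hkq : k < q := Finset.mem_range.mp hkr
        have : ¬ (0 ≤ (k:ℤ) - q) := by omega
        rw [if_neg this]
        omega
    · intro m hm
      obtain ⟨hm1, hm2⟩ := Finset.mem_Icc.mp hm
      have hm2' : (m:ℝ) ≤ B := le_trans (by exact_mod_cast hm2) (Int.floor_le B)
      have hm1' : A ≤ (m:ℝ) := le_trans (Int.le_ceil A) (by exact_mod_cast hm1)
      by_cases h0 : 0 ≤ m
      · rw [if_pos h0]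
        have hcast : ((m.toNat : ℕ) : ℝ) = (m : ℝ) := by
          have h := Int.toNat_of_nonneg h0
          calc ((m.toNat : ℕ) : ℝ) = ((m.toNat : ℤ) : ℝ) := by push_cast; ring
            _ = (m : ℝ) := by rw [h]
        rw [if_pos (by rw [hcast]; exact hm2')]
        omega
      · rw [if_neg h0]
        push_neg at h0
        have hpos : 0 < m + q := by
          have : -(q:ℝ) < (m:ℝ) := lt_of_lt_of_le hAq hm1'
          have : -(q:ℤ) < m := by exact_mod_cast this
          omega
        have hcast : (((m+q).toNat : ℕ) : ℝ) = (m : ℝ) + q := by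
          have h := Int.toNat_of_nonneg hpos.le
          calc (((m+q).toNat : ℕ) : ℝ) = (((m+q).toNat : ℤ) : ℝ) := by push_cast; ring
            _ = (m : ℝ) + q := by rw [h]; push_cast; ring
        have : ¬ ((((m+q).toNat : ℕ) : ℝ) ≤ B) := by rw [hcast]; push_neg; linarith
        rw [if_neg this]
        omega
  rw [cardeq, Int.card_Icc]
  have hceil : (⌈A⌉ : ℝ) < A + 1 := Int.ceil_lt_add_one A
  have hceil2 : A ≤ (⌈A⌉ : ℝ) := Int.le_ceil A
  have hfloor : B - 1 < (⌊B⌋ : ℝ) := Int.sub_one_lt_floor B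
  have hfloor2 : (⌊B⌋ : ℝ) ≤ B := Int.floor_le B
  constructor
  · have h1 : ⌈A⌉ ≤ ⌊B⌋ + 1 := by
      have hr : (⌈A⌉:ℝ) < (⌊B⌋:ℝ) + 2 := by linarith
      have hz : ⌈A⌉ < ⌊B⌋ + 2 := by exact_mod_cast hr
      omega
    have := Int.toNat_of_nonneg (by omega : 0 ≤ ⌊B⌋ + 1 - ⌈A⌉)
    have hcast : ((⌊B⌋ + 1 - ⌈A⌉).toNat : ℝ) = (⌊B⌋:ℝ) + 1 - ⌈A⌉ := by
      rw [← Int.cast_natCast, this]; push_cast; ring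
    rw [hcast]
    have : (q:ℝ) * (v - u) = B - A := by rw [hA, hB]; ring
    rw [this]; linarith
  · rcases le_or_gt ((⌊B⌋ + 1 - ⌈A⌉)) 0 with h | h
    · have : (⌊B⌋ + 1 - ⌈A⌉).toNat = 0 := by omega
      rw [this]
      have : (q:ℝ) * (v - u) = B - A := by rw [hA, hB]; ring
      push_cast
      nlinarith
    · have hcast : ((⌊B⌋ + 1 - ⌈A⌉).toNat : ℝ) = (⌊B⌋:ℝ) + 1 - ⌈A⌉ := by
        rw [← Int.cast_natCast, Int.toNat_of_nonneg h.le]; push_cast; ring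
      rw [hcast]
      have : (q:ℝ) * (v - u) = B - A := by rw [hA, hB]; ring
      rw [this]; linarith

lemma coprime_reindex (q : ℕ) (hq : 0 < q) (p : ℤ) (hco : IsCoprime p (q:ℤ)) (c : ℝ)
    (P : ℝ → Prop) [DecidablePred P] :
    ((Finset.range q).filter (fun i : ℕ => P (Int.fract (c + ((i:ℝ) * (p:ℝ)) / (q:ℝ))))).card =
    ((Finset.range q).filter (fun k : ℕ => P (Int.fract (c + (k:ℝ) / (q:ℝ))))).card := by
  have hq' : (0:ℝ) < q := Nat.cast_pos.mpr hq
  have hqz : (q:ℤ) ≠ 0 := by exact_mod_cast hq.ne'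
  set f : ℕ → ℕ := fun i => (((i:ℤ) * p) % q).toNat with hf
  have hf_lt : ∀ i : ℕ, f i < q := by
    intro i
    have h1 := Int.emod_lt_of_pos ((i:ℤ) * p) (by exact_mod_cast hq : (0:ℤ) < q)
    have h2 := Int.emod_nonneg ((i:ℤ) * p) hqz
    simp only [hf]
    omega
  have hf_cast : ∀ i : ℕ, ((f i : ℕ) : ℝ) = ((((i:ℤ) * p) % q : ℤ) : ℝ) := by
    intro i
    have h2 := Int.emod_nonneg ((i:ℤ) * p) hqz
    have h := Int.toNat_of_nonneg h2
    calc ((f i : ℕ) : ℝ) = (((((i:ℤ) * p) % q).toNat : ℤ) : ℝ) := by push_cast [hf]; ring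
      _ = ((((i:ℤ) * p) % q : ℤ) : ℝ) := by rw [h]
  have hfr : ∀ i : ℕ, Int.fract (c + ((i:ℝ) * (p:ℝ)) / (q:ℝ)) =
      Int.fract (c + ((f i : ℕ) : ℝ) / (q:ℝ)) := by
    intro i
    have hdiv : ((i:ℤ) * p) = q * (((i:ℤ) * p) / q) + ((i:ℤ) * p) % q := (Int.mul_ediv_add_emod _ _).symm
    have : c + ((i:ℝ) * (p:ℝ)) / (q:ℝ) =
        ((((i:ℤ) * p) / q : ℤ) : ℝ) + (c + ((f i : ℕ) : ℝ) / (q:ℝ)) := by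
      rw [hf_cast i]
      have hr : (((i:ℤ) * p : ℤ) : ℝ) = (q:ℝ) * ((((i:ℤ) * p) / q : ℤ) : ℝ) +
          ((((i:ℤ) * p) % q : ℤ) : ℝ) := by exact_mod_cast congrArg (Int.cast : ℤ → ℝ) hdiv
      have hi : ((i:ℝ) * (p:ℝ)) = (((i:ℤ) * p : ℤ) : ℝ) := by push_cast; ring
      rw [hi, hr]
      field_simp
      ring
    rw [this, Int.fract_intCast_add]
  have hf_inj : ∀ i ∈ Finset.range q, ∀ j ∈ Finset.range q, f i = f j → i = j := by
    intro i hi j hj hij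
    have hiq : i < q := Finset.mem_range.mp hi
    have hjq : j < q := Finset.mem_range.mp hj
    have h2i := Int.emod_nonneg ((i:ℤ) * p) hqz
    have h2j := Int.emod_nonneg ((j:ℤ) * p) hqz
    have hmod : ((i:ℤ) * p) % q = ((j:ℤ) * p) % q := by
      have := congrArg (fun n : ℕ => (n : ℤ)) hij
      simpa [hf, Int.toNat_of_nonneg h2i, Int.toNat_of_nonneg h2j] using this
    have hdvd : (q:ℤ) ∣ ((i:ℤ) - j) * p := by
      have h := Int.sub_emod ((i:ℤ)*p) ((j:ℤ)*p) q
      rw [hmod, sub_self, Int.zero_emod] at h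
      have : (q:ℤ) ∣ ((i:ℤ)*p - (j:ℤ)*p) := Int.dvd_of_emod_eq_zero h
      convert this using 1
      ring
    have hdvd2 : (q:ℤ) ∣ ((i:ℤ) - j) := (hco.symm).dvd_of_dvd_mul_right hdvd
    obtain ⟨d, hd⟩ := hdvd2
    rcases lt_trichotomy d 0 with h | h | h
    · exfalso; nlinarith [hd, (by exact_mod_cast hiq : (i:ℤ) < q), (by exact_mod_cast hjq : (j:ℤ) < q),
        (by positivity : (0:ℤ) ≤ (i:ℤ)), (by positivity : (0:ℤ) ≤ (j:ℤ))]
    · rw [h, mul_zero] at hd; omega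
    · exfalso; nlinarith [hd, (by exact_mod_cast hiq : (i:ℤ) < q), (by exact_mod_cast hjq : (j:ℤ) < q),
        (by positivity : (0:ℤ) ≤ (i:ℤ)), (by positivity : (0:ℤ) ≤ (j:ℤ))]
  have hf_surj : ∀ b ∈ Finset.range q, ∃ a ∈ Finset.range q, f a = b := by
    have hmaps : ∀ a ∈ Finset.range q, f a ∈ Finset.range q := fun a _ =>
      Finset.mem_range.mpr (hf_lt a)
    have himg : (Finset.range q).image f = Finset.range q := by
      apply Finset.eq_of_subset_of_card_le
      · intro b hb
        obtain ⟨a, ha, hab⟩ := Finset.mem_image.mp hb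
        rw [← hab]; exact hmaps a ha
      · rw [Finset.card_image_of_injOn (fun i hi j hj => hf_inj i hi j hj)]
    intro b hb
    rw [← himg] at hb
    obtain ⟨a, ha, hab⟩ := Finset.mem_image.mp hb
    exact ⟨a, ha, hab⟩
  apply Finset.card_bij (fun i _ => f i)
  · intro i hi
    obtain ⟨hir, hip⟩ := Finset.mem_filter.mp hi
    refine Finset.mem_filter.mpr ⟨Finset.mem_range.mpr (hf_lt i), ?_⟩
    rw [← hfr i]; exact hip
  · intro i hi j hj hij
    exact hf_inj i (Finset.mem_filter.mp hi).1 j (Finset.mem_filter.mp hj).1 hij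
  · intro b hb
    obtain ⟨hbr, hbp⟩ := Finset.mem_filter.mp hb
    obtain ⟨a, ha, hab⟩ := hf_surj b hbr
    refine ⟨a, Finset.mem_filter.mpr ⟨ha, ?_⟩, hab⟩
    rw [hfr a, hab]; exact hbp

lemma block_bound (θ a b c : ℝ) (hθ : Irrational θ) (q : ℕ) (hq : 0 < q) (p : ℤ)
    (hco : IsCoprime p (q:ℤ)) (δ : ℝ) (hδ : δ = (q:ℝ) * |θ - (p:ℝ) / (q:ℝ)|)
    (hδa : δ < a) (hδb : δ < 1 - b) (hδab : 2*δ ≤ b - a) (ha : 0 < a) (hb : b < 1) :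
    |(((Finset.range q).filter (fun i : ℕ => a < Int.fract (c + (i:ℝ) * θ) ∧
        Int.fract (c + (i:ℝ) * θ) < b)).card : ℝ) - (q:ℝ) * (b - a)| ≤ 2 * (q:ℝ) * δ + 1 := by
  classical
  have hq' : (0:ℝ) < q := Nat.cast_pos.mpr hq
  have hne : θ ≠ (p:ℝ) / (q:ℝ) := by
    intro h
    apply hθ.ne_rat ((p : ℚ) / (q : ℚ))
    rw [h]; push_cast; ring
  have hd0 : 0 < |θ - (p:ℝ) / (q:ℝ)| := abs_pos.mpr (sub_ne_zero.mpr hne)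
  have hδ0 : 0 < δ := by rw [hδ]; positivity
  have he : ∀ i : ℕ, i < q → |(i:ℝ) * (θ - (p:ℝ)/(q:ℝ))| < δ := by
    intro i hi
    rw [abs_mul, abs_of_nonneg (Nat.cast_nonneg i : (0:ℝ) ≤ i), hδ]
    have : (i:ℝ) < q := by exact_mod_cast hi
    nlinarith
  have hsplit : ∀ i : ℕ, c + (i:ℝ) * θ - (i:ℝ) * (θ - (p:ℝ)/(q:ℝ)) =
      c + ((i:ℝ) * (p:ℝ)) / (q:ℝ) := by intro i; field_simp; ring
  -- upper bound
  have hupper : (((Finset.range q).filter (fun i : ℕ => a < Int.fract (c + (i:ℝ) * θ) ∧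
      Int.fract (c + (i:ℝ) * θ) < b)).card : ℝ) ≤ (q:ℝ) * (b - a) + (2 * (q:ℝ) * δ + 1) := by
    have hsub : ((Finset.range q).filter (fun i : ℕ => a < Int.fract (c + (i:ℝ) * θ) ∧
        Int.fract (c + (i:ℝ) * θ) < b)) ⊆
        ((Finset.range q).filter (fun i : ℕ =>
          Int.fract (c + ((i:ℝ) * (p:ℝ)) / (q:ℝ)) ∈ Set.Icc (a - δ) (b + δ))) := by
      intro i hi
      obtain ⟨hir, hp1, hp2⟩ := Finset.mem_filter.mp hi
      refine Finset.mem_filter.mpr ⟨hir, ?_⟩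
      have := fract_perturb_mem_Icc (he i (Finset.mem_range.mp hir)).le
        (by linarith) (by linarith) ⟨hp1, hp2⟩
      rwa [hsplit i] at this
    have h1 := Finset.card_le_card hsub
    have h2 := coprime_reindex q hq p hco c (fun x => x ∈ Set.Icc (a - δ) (b + δ))
    have h3 := (grid_count q hq c (a - δ) (b + δ) (by linarith) (by linarith) (by linarith)).2
    calc (((Finset.range q).filter (fun i : ℕ => a < Int.fract (c + (i:ℝ) * θ) ∧
        Int.fract (c + (i:ℝ) * θ) < b)).card : ℝ)
        ≤ (((Finset.range q).filter (fun i : ℕ =>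
          Int.fract (c + ((i:ℝ) * (p:ℝ)) / (q:ℝ)) ∈ Set.Icc (a - δ) (b + δ))).card : ℝ) := by
          exact_mod_cast h1
      _ = (((Finset.range q).filter (fun k : ℕ =>
          Int.fract (c + (k:ℝ) / (q:ℝ)) ∈ Set.Icc (a - δ) (b + δ))).card : ℝ) := by
          exact_mod_cast h2
      _ ≤ (q:ℝ) * ((b + δ) - (a - δ)) + 1 := h3
      _ = (q:ℝ) * (b - a) + (2 * (q:ℝ) * δ + 1) := by ring
  -- lower bound
  have hlower : (q:ℝ) * (b - a) - (2 * (q:ℝ) * δ + 1) ≤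
      (((Finset.range q).filter (fun i : ℕ => a < Int.fract (c + (i:ℝ) * θ) ∧
      Int.fract (c + (i:ℝ) * θ) < b)).card : ℝ) := by
    have hsub : ((Finset.range q).filter (fun i : ℕ =>
        Int.fract (c + ((i:ℝ) * (p:ℝ)) / (q:ℝ)) ∈ Set.Icc (a + δ) (b - δ))) ⊆
        ((Finset.range q).filter (fun i : ℕ => a < Int.fract (c + (i:ℝ) * θ) ∧
        Int.fract (c + (i:ℝ) * θ) < b)) := by
      intro i hi
      obtain ⟨hir, hp⟩ := Finset.mem_filter.mp hi
      refine Finset.mem_filter.mpr ⟨hir, ?_⟩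
      have := fract_perturb_mem_Ioo (he i (Finset.mem_range.mp hir))
        (by linarith) (by linarith) hp
      have heq : c + ((i:ℝ) * (p:ℝ)) / (q:ℝ) + (i:ℝ) * (θ - (p:ℝ)/(q:ℝ)) = c + (i:ℝ) * θ := by
        field_simp; ring
      rw [heq] at this
      exact this
    have h1 := Finset.card_le_card hsub
    have h2 := coprime_reindex q hq p hco c (fun x => x ∈ Set.Icc (a + δ) (b - δ))
    have h3 := (grid_count q hq c (a + δ) (b - δ) (by linarith) (by linarith) (by linarith)).1
    calc (q:ℝ) * (b - a) - (2 * (q:ℝ) * δ + 1) = (q:ℝ) * ((b - δ) - (a + δ)) - 1 := by ring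
      _ ≤ (((Finset.range q).filter (fun k : ℕ =>
          Int.fract (c + (k:ℝ) / (q:ℝ)) ∈ Set.Icc (a + δ) (b - δ))).card : ℝ) := h3
      _ = (((Finset.range q).filter (fun i : ℕ =>
          Int.fract (c + ((i:ℝ) * (p:ℝ)) / (q:ℝ)) ∈ Set.Icc (a + δ) (b - δ))).card : ℝ) := by
          exact_mod_cast h2.symm
      _ ≤ _ := by exact_mod_cast h1
  rw [abs_le]
  constructor <;> linarith

lemma count_decomp (θ β a b : ℝ) (q M : ℕ) (hq : 0 < q) (hMq : q ≤ M) :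
    ((Finset.range M).filter (fun n : ℕ => a < Int.fract (θ*(n:ℝ)+β) ∧
      Int.fract (θ*(n:ℝ)+β) < b)).card =
    ((Finset.range (M-q)).filter (fun n : ℕ => a < Int.fract (θ*(n:ℝ)+β) ∧
      Int.fract (θ*(n:ℝ)+β) < b)).card +
    ((Finset.range q).filter (fun i : ℕ =>
      a < Int.fract ((θ*((M-q:ℕ):ℝ)+β) + (i:ℝ)*θ) ∧
      Int.fract ((θ*((M-q:ℕ):ℝ)+β) + (i:ℝ)*θ) < b)).card := by
  classical
  have hsplit : Finset.range M = Finset.range (M-q) ∪ Finset.Ico (M-q) M := by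
    rw [Finset.range_eq_Ico, Finset.range_eq_Ico]
    rw [Finset.Ico_union_Ico_eq_Ico (Nat.zero_le _) (Nat.sub_le _ _)]
  have hdisj : Disjoint (Finset.range (M-q)) (Finset.Ico (M-q) M) := by
    rw [Finset.range_eq_Ico]
    exact Finset.Ico_disjoint_Ico_consecutive 0 (M-q) M
  rw [hsplit, Finset.filter_union, Finset.card_union_of_disjoint
    (Finset.disjoint_filter_filter hdisj)]
  congr 1
  symm
  apply Finset.card_bij (fun (i : ℕ) _ => (M - q) + i)
  · intro i hi
    obtain ⟨hir, hp1, hp2⟩ := Finset.mem_filter.mp hi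
    have hiq : i < q := Finset.mem_range.mp hir
    refine Finset.mem_filter.mpr ⟨Finset.mem_Ico.mpr ⟨Nat.le_add_right _ _, by omega⟩, ?_⟩
    have hcast : θ*((((M-q)+i : ℕ)):ℝ)+β = (θ*((M-q:ℕ):ℝ)+β) + (i:ℝ)*θ := by
      push_cast; ring
    rw [hcast]
    exact ⟨hp1, hp2⟩
  · intro i hi j hj hij; omega
  · intro j hj
    obtain ⟨hjr, hp1, hp2⟩ := Finset.mem_filter.mp hj
    obtain ⟨hj1, hj2⟩ := Finset.mem_Ico.mp hjr
    refine ⟨j - (M-q), Finset.mem_filter.mpr ⟨Finset.mem_range.mpr (by omega), ?_⟩, by omega⟩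
    have hcast : (θ*((M-q:ℕ):ℝ)+β) + ((j - (M-q) : ℕ):ℝ)*θ = θ*((j:ℕ):ℝ)+β := by
      have : ((j - (M-q) : ℕ):ℝ) = (j:ℝ) - ((M-q:ℕ):ℝ) := by
        rw [Nat.cast_sub (by omega)]
      rw [this]; ring
    rw [hcast]
    exact ⟨hp1, hp2⟩

lemma count_all (θ a b : ℝ) (hθ : Irrational θ) (q : ℕ) (hq : 0 < q) (p : ℤ)
    (hco : IsCoprime p (q:ℤ)) (δ : ℝ) (hδ : δ = (q:ℝ) * |θ - (p:ℝ) / (q:ℝ)|)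
    (hδa : δ < a) (hδb : δ < 1 - b) (hδab : 2*δ ≤ b - a) (ha : 0 < a) (hb : b < 1)
    (hab : a < b) :
    ∀ s : ℕ, ∀ β : ℝ, ∀ M : ℕ, M < (s+1)*q →
      |(((Finset.range M).filter (fun n : ℕ => a < Int.fract (θ*(n:ℝ)+β) ∧
          Int.fract (θ*(n:ℝ)+β) < b)).card : ℝ) - (b-a)*M| ≤
        (2*(q:ℝ)*δ+1) * s + ((q:ℝ) + (2*(q:ℝ)*δ+1)) := by
  classical
  have hq' : (0:ℝ) < q := Nat.cast_pos.mpr hq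
  have hδ0 : 0 < δ := by
    rw [hδ]
    have hne : θ ≠ (p:ℝ) / (q:ℝ) := by
      intro h
      apply hθ.ne_rat ((p : ℚ) / (q : ℚ))
      rw [h]; push_cast; ring
    have := abs_pos.mpr (sub_ne_zero.mpr hne)
    positivity
  intro s
  induction s with
  | zero =>
    intro β M hM'
    have hM : M < q := by omega
    -- base case: M < q
    have hMr : (M:ℝ) < q := by exact_mod_cast hM
    have hblk := block_bound θ a b β hθ q hq p hco δ hδ hδa hδb hδab ha hb
    have hsub : ((Finset.range M).filter (fun n : ℕ => a < Int.fract (θ*(n:ℝ)+β) ∧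
        Int.fract (θ*(n:ℝ)+β) < b)) ⊆
        ((Finset.range q).filter (fun i : ℕ => a < Int.fract (β + (i:ℝ)*θ) ∧
        Int.fract (β + (i:ℝ)*θ) < b)) := by
      intro n hn
      obtain ⟨hnr, hp1, hp2⟩ := Finset.mem_filter.mp hn
      refine Finset.mem_filter.mpr ⟨Finset.mem_range.mpr (by
        have := Finset.mem_range.mp hnr; omega), ?_⟩
      have hcast : β + (n:ℝ)*θ = θ*(n:ℝ)+β := by ring
      rw [hcast]
      exact ⟨hp1, hp2⟩
    have h1 : (((Finset.range M).filter (fun n : ℕ => a < Int.fract (θ*(n:ℝ)+β) ∧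
        Int.fract (θ*(n:ℝ)+β) < b)).card : ℝ) ≤
        (((Finset.range q).filter (fun i : ℕ => a < Int.fract (β + (i:ℝ)*θ) ∧
        Int.fract (β + (i:ℝ)*θ) < b)).card : ℝ) := by
      exact_mod_cast Finset.card_le_card hsub
    have h2 : (((Finset.range q).filter (fun i : ℕ => a < Int.fract (β + (i:ℝ)*θ) ∧
        Int.fract (β + (i:ℝ)*θ) < b)).card : ℝ) ≤ (q:ℝ)*(b-a) + (2*(q:ℝ)*δ+1) := by
      have := abs_le.mp hblk
      linarith [this.2]
    have h3 : (0:ℝ) ≤ (((Finset.range M).filter (fun n : ℕ => a < Int.fract (θ*(n:ℝ)+β) ∧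
        Int.fract (θ*(n:ℝ)+β) < b)).card : ℝ) := Nat.cast_nonneg _
    have h4 : (0:ℝ) ≤ (b-a)*M := mul_nonneg (by linarith) (Nat.cast_nonneg M)
    have h5 : (b-a)*M ≤ (q:ℝ)*(b-a) := by nlinarith
    have h6 : (q:ℝ)*(b-a) ≤ (q:ℝ) := by nlinarith
    have hEb : (0:ℝ) ≤ 2*(q:ℝ)*δ+1 := by nlinarith [hq'.le, hδ0.le]
    rw [abs_le]
    push_cast
    constructor
    · linarith
    · linarith
  | succ s ih =>
    intro β M hM
    rcases lt_or_ge M ((s+1)*q) with hM' | hM'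
    · have := ih β M hM'
      have hEb : (0:ℝ) ≤ 2*(q:ℝ)*δ+1 := by positivity
      calc |(((Finset.range M).filter (fun n : ℕ => a < Int.fract (θ*(n:ℝ)+β) ∧
          Int.fract (θ*(n:ℝ)+β) < b)).card : ℝ) - (b-a)*M|
          ≤ (2*(q:ℝ)*δ+1) * s + ((q:ℝ) + (2*(q:ℝ)*δ+1)) := this
        _ ≤ (2*(q:ℝ)*δ+1) * (s+1:ℕ) + ((q:ℝ) + (2*(q:ℝ)*δ+1)) := by
            push_cast; nlinarith
    · have hq1 : q ≤ (s+1)*q := Nat.le_mul_of_pos_left q (by omega)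
      have hqM : q ≤ M := le_trans hq1 hM'
      have hdec := count_decomp θ β a b q M hq hqM
      have hexp : (s+1+1)*q = (s+1)*q + q := by ring
      have hMq : M - q < (s+1)*q := by omega
      have hih := ih β (M-q) hMq
      have hblk := block_bound θ a b (θ*((M-q:ℕ):ℝ)+β) hθ q hq p hco δ hδ hδa hδb hδab ha hb
      have hcast : ((M-q:ℕ):ℝ) = (M:ℝ) - q := by
        rw [Nat.cast_sub hqM]
      have hsum : (b-a)*(M:ℝ) = (b-a)*((M-q:ℕ):ℝ) + (q:ℝ)*(b-a) := by
        rw [hcast]; ring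
      rw [hdec]
      have e1 := abs_le.mp hih
      have e2 := abs_le.mp hblk
      have hadd : ∀ m n : ℕ, ((m+n : ℕ):ℝ) = (m:ℝ)+(n:ℝ) := fun m n => by push_cast; ring
      rw [abs_le, hadd, hadd]
      have e11 := e1.1
      have e12 := e1.2
      have e21 := e2.1
      have e22 := e2.2
      push_cast at e11 e12 e21 e22 hsum ⊢
      constructor
      · linarith [e11, e21, hsum]
      · linarith [e12, e22, hsum]
lemma round_is_nearest (x : ℝ) (z : ℤ) : |x - round x| ≤ |x - (z:ℝ)| := by
  rw [abs_sub_round_eq_min]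
  rcases le_or_gt (z:ℝ) (⌊x⌋ : ℝ) with h | h
  · have h1 : x - (z:ℝ) ≤ |x - (z:ℝ)| := le_abs_self _
    have h2 : Int.fract x = x - ⌊x⌋ := rfl
    have := min_le_left (Int.fract x) (1 - Int.fract x)
    linarith [Int.fract_nonneg x]
  · have hz : (⌊x⌋ : ℤ) + 1 ≤ z := by exact_mod_cast h
    have hz' : (⌊x⌋ : ℝ) + 1 ≤ (z:ℝ) := by exact_mod_cast hz
    have h1 : (z:ℝ) - x ≤ |x - (z:ℝ)| := by rw [abs_sub_comm]; exact le_abs_self _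
    have h2 : Int.fract x = x - ⌊x⌋ := rfl
    have := min_le_right (Int.fract x) (1 - Int.fract x)
    linarith
lemma rat_approx_pair (θ : ℝ) (hθ : Irrational θ) (n : ℕ) (hn : 0 < n) :
    ∃ pq : ℤ × ℤ, pq ∈ irrApproxSet θ 1 ∧ |θ - (pq.1:ℝ)/(pq.2:ℝ)| ≤ 1/(2*(n:ℝ)) := by
  have hn' : (0:ℝ) < n := Nat.cast_pos.mpr hn
  set r : ℚ := ((round ((n:ℝ)*θ) : ℤ) : ℚ) / (((n:ℕ):ℤ) : ℚ) with hr
  have hrcast : (r : ℝ) = ((round ((n:ℝ)*θ) : ℤ) : ℝ) / (n : ℝ) := by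
    rw [hr]; push_cast; ring
  have hden_dvd : ((r.den : ℤ)) ∣ (n:ℤ) := by
    have h1 : r = Rat.divInt (round ((n:ℝ)*θ)) ((n:ℕ):ℤ) := by
      rw [hr, Rat.intCast_div_eq_divInt]
    rw [h1]
    exact Rat.den_dvd _ _
  have hden_le : (r.den : ℝ) ≤ (n : ℝ) := by
    have := Int.le_of_dvd (by exact_mod_cast hn) hden_dvd
    exact_mod_cast this
  have hden_pos : (0:ℝ) < r.den := by exact_mod_cast r.pos
  have happrox : |θ - (r:ℝ)| ≤ 1/(2*(n:ℝ)) := by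
    have h1 : |(n:ℝ)*θ - round ((n:ℝ)*θ)| ≤ 1/2 := abs_sub_round _
    have h2 : θ - (r:ℝ) = ((n:ℝ)*θ - round ((n:ℝ)*θ)) / (n:ℝ) := by
      rw [hrcast]; field_simp
    rw [h2, abs_div, abs_of_pos hn']
    rw [div_le_div_iff₀ hn' (by positivity)]
    nlinarith [abs_nonneg ((n:ℝ)*θ - round ((n:ℝ)*θ))]
  have hnum_den : (r : ℝ) = (r.num : ℝ) / (r.den : ℝ) := by
    rw [Rat.cast_def]
  have hne : θ ≠ (r : ℝ) := hθ.ne_rat r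
  refine ⟨(r.num, (r.den : ℤ)), ⟨?_, ?_, ?_, ?_⟩, ?_⟩
  · show (0:ℤ) < (r.den : ℤ)
    exact_mod_cast r.pos
  · rw [Int.isCoprime_iff_gcd_eq_one]
    exact_mod_cast r.reduced
  · simp only
    rw [show ((r.den : ℤ) : ℝ) = (r.den : ℝ) by push_cast; ring, ← hnum_den]
    exact abs_pos.mpr (sub_ne_zero.mpr hne)
  · simp only
    rw [show ((r.den : ℤ) : ℝ) = (r.den : ℝ) by push_cast; ring, ← hnum_den,
      Real.rpow_one]
    calc |θ - (r:ℝ)| ≤ 1/(2*(n:ℝ)) := happrox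
      _ < 1/(n:ℝ) := one_div_lt_one_div_of_lt hn' (by linarith)
      _ ≤ 1/(r.den : ℝ) := one_div_le_one_div_of_le hden_pos hden_le
  · simp only
    rw [show ((r.den : ℤ) : ℝ) = (r.den : ℝ) by push_cast; ring, ← hnum_den]
    exact happrox

lemma irrApproxSet_one_infinite (θ : ℝ) (hθ : Irrational θ) :
    (irrApproxSet θ 1).Infinite := by
  by_contra h
  rw [Set.not_infinite] at h
  have hne : (irrApproxSet θ 1).Nonempty := by
    obtain ⟨pq, hpq, _⟩ := rat_approx_pair θ hθ 1 one_pos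
    exact ⟨pq, hpq⟩
  set F := h.toFinset with hF
  have hFne : F.Nonempty := by
    rwa [hF, Set.Finite.toFinset_nonempty]
  set g : ℤ × ℤ → ℝ := fun x => |θ - (x.1:ℝ)/(x.2:ℝ)| with hg
  have hne2 : (F.image g).Nonempty := hFne.image g
  set m := (F.image g).min' hne2 with hm
  have hm_pos : 0 < m := by
    obtain ⟨x, hx, hxm⟩ := Finset.mem_image.mp ((F.image g).min'_mem hne2)
    rw [hm, ← hxm]
    have hx' : x ∈ irrApproxSet θ 1 := by
      rwa [hF, Set.Finite.mem_toFinset] at hx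
    exact hx'.2.2.1
  obtain ⟨n, hn⟩ := exists_nat_gt (1/(2*m))
  have hn0 : 0 < n + 1 := Nat.succ_pos n
  obtain ⟨pq, hpq, hclose⟩ := rat_approx_pair θ hθ (n+1) hn0
  have hmem : pq ∈ F := by rw [hF, Set.Finite.mem_toFinset]; exact hpq
  have h1 : m ≤ g pq := Finset.min'_le _ _ (Finset.mem_image_of_mem g hmem)
  have h2 : g pq ≤ 1/(2*((n+1:ℕ):ℝ)) := hclose
  have h3 : 1/(2*((n+1:ℕ):ℝ)) < m := by
    rw [div_lt_iff₀ (by positivity)]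
    rw [div_lt_iff₀ (by positivity : (0:ℝ) < 2*m)] at hn
    have : (n:ℝ) < ((n+1:ℕ):ℝ) := by push_cast; linarith
    nlinarith
  linarith

lemma approx_finite (θ : ℝ) (κ : ℝ) (hκ : irrationalityExponent θ = (κ:EReal))
    (μ : ℝ) (hμ : κ < μ) : (irrApproxSet θ μ).Finite := by
  by_contra h
  have h1 : (μ:EReal) ≤ irrationalityExponent θ := le_sSup ⟨μ, rfl, h⟩
  rw [hκ] at h1
  have : μ ≤ κ := by exact_mod_cast h1
  linarith

lemma kappa_ge_one (θ : ℝ) (hθ : Irrational θ) (κ : ℝ)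
    (hκ : irrationalityExponent θ = (κ:EReal)) : 1 ≤ κ := by
  have h1 : (((1:ℝ)):EReal) ≤ irrationalityExponent θ :=
    le_sSup ⟨1, rfl, irrApproxSet_one_infinite θ hθ⟩
  rw [hκ] at h1
  exact_mod_cast h1

lemma small_den_bound (θ : ℝ) (hθ : Irrational θ) (q0 : ℕ) :
    ∃ d0 : ℝ, 0 < d0 ∧ ∀ p q : ℤ, 0 < q → q < q0 → d0 ≤ |θ - (p:ℝ)/(q:ℝ)| := by
  rcases Nat.lt_or_ge q0 2 with hq0 | hq0
  · exact ⟨1, one_pos, fun p q hq hq' => by omega⟩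
  · have hne : (Finset.Icc 1 q0).Nonempty := ⟨1, Finset.mem_Icc.mpr ⟨le_refl 1, by omega⟩⟩
    set f : ℕ → ℝ := fun j => |(j:ℝ)*θ - round ((j:ℝ)*θ)| / (q0:ℝ) with hf
    set d0 := (Finset.Icc 1 q0).inf' hne f with hd0
    refine ⟨d0, ?_, ?_⟩
    · rw [hd0, Finset.lt_inf'_iff]
      intro j hj
      obtain ⟨hj1, hj2⟩ := Finset.mem_Icc.mp hj
      have hirr : Irrational ((j:ℝ)*θ) := hθ.natCast_mul (by omega)
      have hne2 : (j:ℝ)*θ ≠ (round ((j:ℝ)*θ) : ℝ) := hirr.ne_int _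
      have : 0 < |(j:ℝ)*θ - round ((j:ℝ)*θ)| := abs_pos.mpr (sub_ne_zero.mpr hne2)
      rw [hf]
      positivity
    · intro p q hq hq'
      have hqn : q.toNat ∈ Finset.Icc 1 q0 := by
        rw [Finset.mem_Icc]; omega
      have hle : d0 ≤ f q.toNat := Finset.inf'_le f hqn
      have hq0' : (0:ℝ) < q0 := by positivity
      have hqr : (0:ℝ) < (q:ℝ) := by exact_mod_cast hq
      have hcast : ((q.toNat : ℕ) : ℝ) = (q:ℝ) := by
        have := Int.toNat_of_nonneg hq.le
        exact_mod_cast congrArg (Int.cast : ℤ → ℝ) this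
      have hqq0 : (q:ℝ) ≤ (q0:ℝ) := by exact_mod_cast (by omega : q ≤ (q0:ℤ))
      have hround := round_is_nearest ((q:ℝ)*θ) p
      have key : θ - (p:ℝ)/(q:ℝ) = ((q:ℝ)*θ - (p:ℝ))/(q:ℝ) := by
        field_simp
      rw [key, abs_div, abs_of_pos hqr]
      calc d0 ≤ f q.toNat := hle
        _ = |(q:ℝ)*θ - round ((q:ℝ)*θ)| / (q0:ℝ) := by rw [hf]; simp only; rw [hcast]
        _ ≤ |(q:ℝ)*θ - (p:ℝ)| / (q0:ℝ) := by gcongr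
        _ ≤ |(q:ℝ)*θ - (p:ℝ)| / (q:ℝ) := by gcongr

lemma good_denominator (θ : ℝ) (hθ : Irrational θ) (κ : ℝ)
    (hκ : irrationalityExponent θ = (κ:EReal)) (μ : ℝ) (hμκ : κ < μ) :
    ∃ R0 : ℝ, ∀ Q : ℕ, R0 ≤ (Q:ℝ) → 0 < Q → ∃ p : ℤ, ∃ q : ℕ, 0 < q ∧ q ≤ Q ∧
      IsCoprime p ((q:ℕ):ℤ) ∧ |θ - (p:ℝ)/((q:ℕ):ℝ)| < 1/(((q:ℕ):ℝ)*((Q:ℕ):ℝ)) ∧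
      ((Q:ℕ):ℝ) < (((q:ℕ):ℝ))^(μ-1) := by
  have hfin := approx_finite θ κ hκ μ hμκ
  set F := hfin.toFinset with hF
  set q0 : ℕ := (F.sup (fun x => x.2.toNat)) + 1 with hq0
  obtain ⟨d0, hd0pos, hd0⟩ := small_den_bound θ hθ q0
  refine ⟨1/d0 + 1, ?_⟩
  intro Q hQR hQ0
  have hQr : (0:ℝ) < Q := Nat.cast_pos.mpr hQ0
  obtain ⟨r, hr1, hr2⟩ := Real.exists_rat_abs_sub_le_and_den_le θ hQ0
  set p := r.num with hp
  set q := r.den with hq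
  have hqpos : 0 < q := r.pos
  have hq' : (0:ℝ) < q := Nat.cast_pos.mpr hqpos
  have hnumden : (r:ℝ) = (p:ℝ)/(q:ℝ) := by rw [Rat.cast_def]
  have hne : θ ≠ (r : ℝ) := hθ.ne_rat r
  have hpos : 0 < |θ - (p:ℝ)/(q:ℝ)| := by
    rw [← hnumden]; exact abs_pos.mpr (sub_ne_zero.mpr hne)
  have hqQ : (q:ℝ) ≤ (Q:ℝ) := by exact_mod_cast hr2
  have happ : |θ - (p:ℝ)/(q:ℝ)| < 1/((q:ℝ)*(Q:ℝ)) := by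
    rw [← hnumden]
    calc |θ - (r:ℝ)| ≤ 1/(((Q:ℝ)+1)*(q:ℝ)) := hr1
      _ < 1/((q:ℝ)*(Q:ℝ)) := by
          apply one_div_lt_one_div_of_lt (by positivity)
          nlinarith
  have hcop : IsCoprime p ((q:ℕ):ℤ) := by
    rw [Int.isCoprime_iff_gcd_eq_one]
    exact_mod_cast r.reduced
  -- q ≥ q0
  have hq0le : q0 ≤ q := by
    by_contra hlt
    push_neg at hlt
    have h1 := hd0 p (q:ℤ) (by exact_mod_cast hqpos) (by exact_mod_cast hlt)
    have hcast : (((q:ℕ):ℤ):ℝ) = (q:ℝ) := by push_cast; ring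
    rw [hcast] at h1
    have hq1 : (1:ℝ) ≤ (q:ℝ) := by exact_mod_cast hqpos
    have h2 : 1/((q:ℝ)*(Q:ℝ)) ≤ 1/(Q:ℝ) := by
      apply one_div_le_one_div_of_le hQr
      nlinarith
    have h3 : 1/(Q:ℝ) ≤ 1/(1/d0 + 1) := by
      apply one_div_le_one_div_of_le (by positivity) hQR
    have h4 : 1/(1/d0 + 1) < d0 := by
      rw [div_lt_iff₀ (by positivity)]
      have : d0 * (1/d0) = 1 := by field_simp
      nlinarith
    linarith
  have hnotmem : (p, ((q:ℕ):ℤ)) ∉ irrApproxSet θ μ := by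
    intro hmem
    have hxF : (p, ((q:ℕ):ℤ)) ∈ F := by rw [hF, Set.Finite.mem_toFinset]; exact hmem
    have := Finset.le_sup (f := fun x : ℤ × ℤ => x.2.toNat) hxF
    simp only [Int.toNat_natCast] at this
    omega
  have hge : 1/((q:ℝ))^μ ≤ |θ - (p:ℝ)/(q:ℝ)| := by
    by_contra hlt2
    push_neg at hlt2
    apply hnotmem
    refine ⟨by show (0:ℤ) < ((q:ℕ):ℤ); exact_mod_cast hqpos, hcop, ?_, ?_⟩
    · show 0 < |θ - (p:ℝ)/(((q:ℕ):ℤ):ℝ)|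
      push_cast
      exact hpos
    · show |θ - (p:ℝ)/(((q:ℕ):ℤ):ℝ)| < 1/((((q:ℕ):ℤ):ℝ))^μ
      push_cast
      exact hlt2
  have hQq : (Q:ℝ) < ((q:ℝ))^(μ-1) := by
    have h5 : 1/((q:ℝ))^μ < 1/((q:ℝ)*(Q:ℝ)) := lt_of_le_of_lt hge happ
    have hrpowpos : (0:ℝ) < ((q:ℝ))^μ := Real.rpow_pos_of_pos hq' μ
    have h6 : (q:ℝ)*(Q:ℝ) < ((q:ℝ))^μ := by
      rw [div_lt_div_iff₀ (by positivity) (by positivity)] at h5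
      nlinarith
    rw [Real.rpow_sub hq', Real.rpow_one, lt_div_iff₀ hq']
    nlinarith
  exact ⟨p, q, hqpos, by exact_mod_cast hqQ, hcop, happ, hQq⟩

set_option maxHeartbeats 2000000 in
theorem card_fract_mem_Ioo_arith_prog (θ : ℝ) (hθ : Irrational θ) (κ : ℝ)
    (hκ : irrationalityExponent θ = (κ : EReal)) (a b ε' : ℝ)
    (ha : 0 < a) (hab : a < b) (hb : b < 1) (hε' : 0 < ε') (hneg : -1 / κ + ε' < 0) :
    ∃ C > 0, ∀ β : ℝ, ∀ M : ℕ, 0 < M →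
      |(((Finset.range M).filter
            (fun n : ℕ => a < Int.fract (θ * (n : ℝ) + β) ∧ Int.fract (θ * (n : ℝ) + β) < b)).card : ℝ) -
          (b - a) * M| ≤ C * (M : ℝ) ^ (1 - 1 / κ + ε') := by
  classical
  have hκpos : 0 < κ := by
    by_contra hc
    push_neg at hc
    have h1 : 1/κ ≤ 0 := one_div_nonpos.mpr hc
    have h2 : -1/κ = -(1/κ) := by ring
    linarith
  have hεκ : ε' < 1/κ := by
    have h2 : -1/κ = -(1/κ) := by ring
    linarith
  have hκ1 : 1 ≤ κ := kappa_ge_one θ hθ κ hκ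
  set η := 1/κ - ε'/2 with hη
  have hηpos : 0 < η := by rw [hη]; linarith
  have hκinv1 : 1/κ ≤ 1 := by
    rw [div_le_one (by linarith)]; linarith
  have hηlt : η < 1 := by rw [hη]; linarith
  set μ := 1/η with hμdef
  have hμη : μ * η = 1 := by rw [hμdef]; field_simp
  have hμ1 : 1 < μ := by
    rw [hμdef, lt_div_iff₀ hηpos, one_mul]
    exact hηlt
  have hμκ : κ < μ := by
    rw [hμdef, lt_div_iff₀ hηpos]
    have h3 : κ * (1/κ) = 1 := by field_simp
    rw [hη]
    nlinarith
  set γ := 1 - η with hγ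
  have hγpos : 0 < γ := by rw [hγ]; linarith
  set E := 1 - 1/κ + ε' with hE
  have hγE : γ < E := by rw [hγ, hη, hE]; linarith
  have hEpos : 0 < E := lt_trans hγpos hγE
  have hημ1 : η * (μ - 1) = γ := by
    have h4 : η*(μ-1) = μ*η - η := by ring
    rw [h4, hμη, hγ]
  obtain ⟨R0, hR0⟩ := good_denominator θ hθ κ hκ μ hμκ
  set δm := min a (min (1-b) ((b-a)/2)) with hδm
  have hδmpos : 0 < δm := by
    rw [hδm]
    exact lt_min ha (lt_min (by linarith) (by linarith))
  have hδma : δm ≤ a := min_le_left _ _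
  have hδmb : δm ≤ 1 - b := le_trans (min_le_right _ _) (min_le_left _ _)
  have hδmab : δm ≤ (b-a)/2 := le_trans (min_le_right _ _) (min_le_right _ _)
  set Rbig := max R0 (max (1/δm) 1) with hRbig
  have hRbig1 : (1:ℝ) ≤ Rbig := le_max_of_le_right (le_max_right _ _)
  obtain ⟨M0, hM0⟩ := exists_nat_ge (Rbig ^ (γ⁻¹))
  set C := (8:ℝ) + 2*((M0:ℝ)+1) with hC
  refine ⟨C, by positivity, ?_⟩
  intro β M hM
  have hM1 : (1:ℝ) ≤ (M:ℝ) := by exact_mod_cast hM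
  have hME1 : (1:ℝ) ≤ (M:ℝ)^E := by
    calc (1:ℝ) = (M:ℝ)^(0:ℝ) := (Real.rpow_zero _).symm
      _ ≤ (M:ℝ)^E := Real.rpow_le_rpow_of_exponent_le hM1 hEpos.le
  rcases lt_or_ge M (M0+1) with hsmall | hbig
  · -- small M
    have hcnt_le : (((Finset.range M).filter
        (fun n : ℕ => a < Int.fract (θ * (n : ℝ) + β) ∧ Int.fract (θ * (n : ℝ) + β) < b)).card : ℝ)
        ≤ (M:ℝ) := by
      have h5 := Finset.card_filter_le (Finset.range M)
        (fun n : ℕ => a < Int.fract (θ * (n : ℝ) + β) ∧ Int.fract (θ * (n : ℝ) + β) < b)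
      rw [Finset.card_range] at h5
      exact_mod_cast h5
    have hcnt0 : (0:ℝ) ≤ (((Finset.range M).filter
        (fun n : ℕ => a < Int.fract (θ * (n : ℝ) + β) ∧ Int.fract (θ * (n : ℝ) + β) < b)).card : ℝ) :=
      Nat.cast_nonneg _
    have hba0 : (0:ℝ) ≤ (b-a)*M := mul_nonneg (by linarith) (Nat.cast_nonneg M)
    have hba1 : (b-a)*M ≤ (M:ℝ) := by nlinarith
    have habs : |(((Finset.range M).filter
        (fun n : ℕ => a < Int.fract (θ * (n : ℝ) + β) ∧ Int.fract (θ * (n : ℝ) + β) < b)).card : ℝ)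
        - (b-a)*M| ≤ (M:ℝ) := by
      rw [abs_le]; constructor <;> linarith
    have h7 : M ≤ M0 + 1 := by omega
    have hMM0 : (M:ℝ) ≤ (M0:ℝ) + 1 := by exact_mod_cast h7
    calc |(((Finset.range M).filter
        (fun n : ℕ => a < Int.fract (θ * (n : ℝ) + β) ∧ Int.fract (θ * (n : ℝ) + β) < b)).card : ℝ)
        - (b-a)*M| ≤ (M:ℝ) := habs
      _ ≤ (M0:ℝ)+1 := hMM0
      _ ≤ ((M0:ℝ)+1) * (M:ℝ)^E := le_mul_of_one_le_right (by positivity) hME1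
      _ ≤ C * (M:ℝ)^E := by
          apply mul_le_mul_of_nonneg_right ?_ (by positivity)
          rw [hC]; linarith [Nat.cast_nonneg (α := ℝ) M0]
  · -- large M
    have hMbig : (Rbig ^ (γ⁻¹) : ℝ) ≤ (M:ℝ) := by
      refine le_trans hM0 ?_
      exact_mod_cast Nat.le_of_succ_le hbig
    have hRbig0 : (0:ℝ) ≤ Rbig := by linarith
    have hMγRbig : Rbig ≤ (M:ℝ)^γ := by
      have h1 : (Rbig ^ (γ⁻¹))^γ = Rbig := by
        rw [← Real.rpow_mul hRbig0, inv_mul_cancel₀ hγpos.ne', Real.rpow_one]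
      have h2 : (Rbig ^ (γ⁻¹))^γ ≤ (M:ℝ)^γ :=
        Real.rpow_le_rpow (Real.rpow_nonneg hRbig0 _) hMbig hγpos.le
      rw [← h1]; exact h2
    set Q := ⌊(M:ℝ)^γ⌋₊ + 1 with hQdef
    have hQpos : 0 < Q := Nat.succ_pos _
    have hQlb : (M:ℝ)^γ < (Q:ℝ) := by
      rw [hQdef]; push_cast; exact Nat.lt_floor_add_one _
    have hQub : (Q:ℝ) ≤ (M:ℝ)^γ + 1 := by
      rw [hQdef]; push_cast
      have := Nat.floor_le (by positivity : (0:ℝ) ≤ (M:ℝ)^γ)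
      linarith
    have hQr : (0:ℝ) < Q := Nat.cast_pos.mpr hQpos
    have hQR0 : R0 ≤ (Q:ℝ) :=
      le_trans (le_trans (le_max_left _ _) hMγRbig) hQlb.le
    obtain ⟨p, q, hqpos, hqQ, hcop, happ, hQq⟩ := hR0 Q hQR0 hQpos
    have hq' : (0:ℝ) < q := Nat.cast_pos.mpr hqpos
    have hqQr : (q:ℝ) ≤ (Q:ℝ) := by exact_mod_cast hqQ
    set δ := (q:ℝ) * |θ - (p:ℝ)/(q:ℝ)| with hδdef
    have hδQ : δ < 1/(Q:ℝ) := by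
      rw [hδdef]
      calc (q:ℝ) * |θ - (p:ℝ)/(q:ℝ)| < (q:ℝ) * (1/((q:ℝ)*(Q:ℝ))) :=
            mul_lt_mul_of_pos_left happ hq'
        _ = 1/(Q:ℝ) := by field_simp
    have hδmQ' : 1/(Q:ℝ) ≤ δm := by
      have h1 : 1/δm ≤ (Q:ℝ) :=
        le_trans (le_trans (le_trans (le_max_left _ _) (le_max_right R0 _)) hMγRbig) hQlb.le
      have h2 : 1/(Q:ℝ) ≤ 1/(1/δm) := one_div_le_one_div_of_le (by positivity) h1
      rwa [one_div_one_div] at h2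
    have hδδm : δ < δm := lt_of_lt_of_le hδQ hδmQ'
    have hδa : δ < a := lt_of_lt_of_le hδδm hδma
    have hδb : δ < 1 - b := lt_of_lt_of_le hδδm hδmb
    have hδab : 2*δ ≤ b - a := by
      have := lt_of_lt_of_le hδδm hδmab
      linarith
    have hMlt : M < (M/q+1)*q := by
      calc M = q*(M/q) + M%q := (Nat.div_add_mod M q).symm
        _ < q*(M/q) + q := Nat.add_lt_add_left (Nat.mod_lt M hqpos) _
        _ = (M/q+1)*q := by ring
    have hcount := count_all θ a b hθ q hqpos p hcop δ hδdef hδa hδb hδab ha hb hab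
      (M/q) β M hMlt
    have hδ0 : 0 ≤ δ := by rw [hδdef]; positivity
    have hEb : 2*(q:ℝ)*δ + 1 ≤ 3 := by
      have h1 : (q:ℝ)*δ ≤ (q:ℝ)*(1/(Q:ℝ)) := mul_le_mul_of_nonneg_left hδQ.le hq'.le
      have h2 : (q:ℝ)*(1/(Q:ℝ)) ≤ 1 := by
        rw [mul_one_div, div_le_one hQr]; exact hqQr
      linarith
    have hqη : (M:ℝ)^η < (q:ℝ) := by
      by_contra hcon
      push_neg at hcon
      have h1 : ((q:ℝ))^(μ-1) ≤ ((M:ℝ)^η)^(μ-1) :=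
        Real.rpow_le_rpow hq'.le hcon (by linarith)
      have h2 : ((M:ℝ)^η)^(μ-1) = (M:ℝ)^γ := by
        rw [← Real.rpow_mul (by linarith : (0:ℝ) ≤ (M:ℝ)), hημ1]
      rw [h2] at h1
      linarith
    have hsle : ((M/q : ℕ):ℝ) ≤ (M:ℝ)/(q:ℝ) := Nat.cast_div_le
    have hMq : (M:ℝ)/(q:ℝ) ≤ (M:ℝ)^γ := by
      have hMη0 : (0:ℝ) < (M:ℝ)^η := by positivity
      have h1 : (M:ℝ)/(q:ℝ) ≤ (M:ℝ)/((M:ℝ)^η) :=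
        div_le_div_of_nonneg_left (by linarith) hMη0 hqη.le
      have h2 : (M:ℝ)^γ = (M:ℝ)/((M:ℝ)^η) := by
        rw [hγ, Real.rpow_sub (by linarith : (0:ℝ) < (M:ℝ)), Real.rpow_one]
      rw [h2]
      exact h1
    have hγE' : (M:ℝ)^γ ≤ (M:ℝ)^E := Real.rpow_le_rpow_of_exponent_le hM1 hγE.le
    have hMγ1 : (1:ℝ) ≤ (M:ℝ)^γ := by
      calc (1:ℝ) = (M:ℝ)^(0:ℝ) := (Real.rpow_zero _).symm
        _ ≤ _ := Real.rpow_le_rpow_of_exponent_le hM1 hγpos.le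
    calc |(((Finset.range M).filter
        (fun n : ℕ => a < Int.fract (θ * (n : ℝ) + β) ∧ Int.fract (θ * (n : ℝ) + β) < b)).card : ℝ)
        - (b-a)*M|
        ≤ (2*(q:ℝ)*δ+1) * ((M/q : ℕ):ℝ) + ((q:ℝ) + (2*(q:ℝ)*δ+1)) := hcount
      _ ≤ 3*((M:ℝ)^γ) + (((M:ℝ)^γ + 1) + 3) := by
          have h6 : ((M/q:ℕ):ℝ) ≤ (M:ℝ)^γ := le_trans hsle hMq
          have hq_le : (q:ℝ) ≤ (M:ℝ)^γ + 1 := le_trans hqQr hQub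
          have hs0 : (0:ℝ) ≤ ((M/q:ℕ):ℝ) := Nat.cast_nonneg _
          have hp1 : (2*(q:ℝ)*δ+1) * ((M/q:ℕ):ℝ) ≤ 3 * ((M/q:ℕ):ℝ) :=
            mul_le_mul_of_nonneg_right hEb hs0
          have hp2 : (3:ℝ) * ((M/q:ℕ):ℝ) ≤ 3*((M:ℝ)^γ) := by linarith
          linarith
      _ ≤ 8*((M:ℝ)^E) := by linarith [hMγ1, hγE']
      _ ≤ C*((M:ℝ)^E) := by
          apply mul_le_mul_of_nonneg_right ?_ (by positivity)
          rw [hC]; linarith [Nat.cast_nonneg (α := ℝ) M0]
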